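/- For every q ∈ (0,2) there exists a constant C_q > 0 with the following property: for all continuously differentiable functions u, v : ℝ → ℂ such that u, u', v, v' are square-integrable, ‖ |v|^q v − |u|^q u ‖ ≤ C_q ‖u − v‖ ( ‖u‖_{H¹}^q + ‖v‖_{H¹}^q ), where the left-hand side is the L²-norm of the function x ↦ |v(x)|^q v(x) − |u(x)|^q u(x). -/

import Mathlib

open MeasureTheory

/-- The `L²(ℝ;ℂ)` norm of a function, `‖f‖ = (∫ ‖f(x)‖² dx)^{1/2}`. -/
noncomputable def L2norm (f : ℝ → ℂ) : ℝ := Real.sqrt (∫ x, ‖f x‖ ^ 2)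

/-- The `H¹(ℝ;ℂ)` norm of a function, `‖f‖_{H¹} = (‖f‖² + ‖f'‖²)^{1/2}`. -/
noncomputable def H1norm (f : ℝ → ℂ) : ℝ :=
  Real.sqrt ((∫ x, ‖f x‖ ^ 2) + ∫ x, ‖deriv f x‖ ^ 2)

lemma ratio_ineq (q : ℝ) (hq : 0 < q) {t : ℝ} (ht0 : 0 ≤ t) (ht1 : t ≤ 1) :
    1 - t ^ q ≤ (q + 1) * (1 - t) := by
  rcases le_or_gt q 1 with hq1 | hq1
  · rcases eq_or_lt_of_le ht0 with h0 | h0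
    · rw [← h0, Real.zero_rpow hq.ne']
      nlinarith
    · have h := Real.rpow_le_rpow_of_exponent_ge h0 ht1 hq1
      rw [Real.rpow_one] at h
      nlinarith
  · have hb := one_add_mul_self_le_rpow_one_add (s := t - 1) (by linarith) hq1.le
    have he : (1 : ℝ) + (t - 1) = t := by ring
    rw [he] at hb
    nlinarith

lemma real_key (q : ℝ) (hq : 0 < q) {a b : ℝ} (ha : 0 ≤ a) (hab : a ≤ b) :
    (b ^ q - a ^ q) * a ≤ (q + 1) * (b ^ q * (b - a)) := by
  rcases eq_or_lt_of_le (ha.trans hab) with hb | hb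
  · have ha0 : a = 0 := le_antisymm (hab.trans_eq hb.symm) ha
    simp [ha0, ← hb, Real.zero_rpow hq.ne']
  · set t := a / b with htdef
    have ht0 : 0 ≤ t := div_nonneg ha hb.le
    have ht1 : t ≤ 1 := (div_le_one hb).2 hab
    have hat : a = t * b := by rw [htdef]; field_simp
    rw [hat, Real.mul_rpow ht0 hb.le]
    have key := ratio_ineq q hq ht0 ht1
    have hbq : 0 ≤ b ^ q := Real.rpow_nonneg hb.le q
    have h1 : 0 ≤ 1 - t ^ q := by
      have := Real.rpow_le_one ht0 ht1 hq.le
      linarith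
    have step : (1 - t ^ q) * t ≤ (q + 1) * (1 - t) := by nlinarith
    have := mul_le_mul_of_nonneg_left step (mul_nonneg hbq hb.le)
    nlinarith

lemma pointwise_half (q : ℝ) (hq : 0 < q) (a b : ℂ) (hab : ‖a‖ ≤ ‖b‖) :
    ‖((‖b‖ ^ q : ℝ) : ℂ) * b - ((‖a‖ ^ q : ℝ) : ℂ) * a‖ ≤ (q + 2) * ‖b‖ ^ q * ‖b - a‖ := by
  have hdecomp : ((‖b‖ ^ q : ℝ) : ℂ) * b - ((‖a‖ ^ q : ℝ) : ℂ) * a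
      = ((‖b‖ ^ q : ℝ) : ℂ) * (b - a) + (((‖b‖ ^ q - ‖a‖ ^ q : ℝ)) : ℂ) * a := by
    push_cast; ring
  rw [hdecomp]
  have hbqnn : 0 ≤ ‖b‖ ^ q := Real.rpow_nonneg (norm_nonneg b) q
  have h1 : ‖((‖b‖ ^ q : ℝ) : ℂ) * (b - a)‖ = ‖b‖ ^ q * ‖b - a‖ := by
    rw [norm_mul, Complex.norm_real, Real.norm_of_nonneg hbqnn]
  have h2 : ‖(((‖b‖ ^ q - ‖a‖ ^ q : ℝ)) : ℂ) * a‖ ≤ (q + 1) * (‖b‖ ^ q * ‖b - a‖) := by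
    rw [norm_mul, Complex.norm_real]
    have hge : 0 ≤ ‖b‖ ^ q - ‖a‖ ^ q :=
      sub_nonneg.2 (Real.rpow_le_rpow (norm_nonneg a) hab hq.le)
    rw [Real.norm_of_nonneg hge]
    have hkey := real_key q hq (norm_nonneg a) hab
    have hba : ‖b‖ - ‖a‖ ≤ ‖b - a‖ := norm_sub_norm_le b a
    nlinarith [mul_le_mul_of_nonneg_left hba hbqnn]
  calc ‖((‖b‖ ^ q : ℝ) : ℂ) * (b - a) + (((‖b‖ ^ q - ‖a‖ ^ q : ℝ)) : ℂ) * a‖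
      ≤ ‖((‖b‖ ^ q : ℝ) : ℂ) * (b - a)‖ + ‖(((‖b‖ ^ q - ‖a‖ ^ q : ℝ)) : ℂ) * a‖ :=
        norm_add_le _ _
    _ ≤ ‖b‖ ^ q * ‖b - a‖ + (q + 1) * (‖b‖ ^ q * ‖b - a‖) := by rw [h1]; linarith
    _ = (q + 2) * ‖b‖ ^ q * ‖b - a‖ := by ring

lemma pointwise_key (q : ℝ) (hq : 0 < q) (a b : ℂ) :
    ‖((‖b‖ ^ q : ℝ) : ℂ) * b - ((‖a‖ ^ q : ℝ) : ℂ) * a‖ ≤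
      (q + 2) * (‖a‖ ^ q + ‖b‖ ^ q) * ‖b - a‖ := by
  have haq : 0 ≤ ‖a‖ ^ q := Real.rpow_nonneg (norm_nonneg a) q
  have hbq : 0 ≤ ‖b‖ ^ q := Real.rpow_nonneg (norm_nonneg b) q
  rcases le_total ‖a‖ ‖b‖ with h | h
  · have hh := pointwise_half q hq a b h
    nlinarith [hh, mul_nonneg (mul_nonneg (by linarith : (0:ℝ) ≤ q + 2) haq)
      (norm_nonneg (b - a))]
  · have hh := pointwise_half q hq b a h
    rw [norm_sub_rev] at hh
    rw [norm_sub_rev b a]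
    nlinarith [hh, mul_nonneg (mul_nonneg (by linarith : (0:ℝ) ≤ q + 2) hbq)
      (norm_nonneg (a - b))]

lemma integrable_norm_sq {u : ℝ → ℂ} (hu : MemLp u 2 (volume : Measure ℝ)) :
    Integrable (fun x => ‖u x‖ ^ 2) := by
  have h := hu.integrable_norm_rpow two_ne_zero ENNReal.ofNat_ne_top
  refine h.congr (Filter.Eventually.of_forall fun x => ?_)
  show ‖u x‖ ^ ((2 : ENNReal)).toReal = ‖u x‖ ^ (2 : ℕ)
  rw [show ((2 : ENNReal)).toReal = ((2 : ℕ) : ℝ) by norm_num, Real.rpow_natCast]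

lemma sup_sq_le (u : ℝ → ℂ) (hu : ContDiff ℝ 1 u) (hu2 : MemLp u 2 (volume : Measure ℝ))
    (hu'2 : MemLp (deriv u) 2 (volume : Measure ℝ)) (x : ℝ) :
    ‖u x‖ ^ 2 ≤ (∫ y, ‖u y‖ ^ 2) + ∫ y, ‖deriv u y‖ ^ 2 := by
  have hud : Differentiable ℝ u := hu.differentiable one_ne_zero
  have hu'c : Continuous (deriv u) := hu.continuous_deriv le_rfl
  set g : ℝ → ℝ := fun y => ‖u y‖ ^ 2 with hgdef
  set φ : ℝ → ℝ := fun y => 2 * (inner ℝ (u y) (deriv u y) : ℝ) with hφdef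
  have hgderiv : ∀ y, HasDerivAt g (φ y) y := fun y => ((hud y).hasDerivAt).norm_sq
  have hφc : Continuous φ :=
    continuous_const.mul (hu.continuous.inner hu'c)
  have h2 : Integrable g := integrable_norm_sq hu2
  have h2' : Integrable (fun y => ‖deriv u y‖ ^ 2) := integrable_norm_sq hu'2
  have hφbound : ∀ y, ‖φ y‖ ≤ ‖u y‖ ^ 2 + ‖deriv u y‖ ^ 2 := by
    intro y
    have hcs : |(inner ℝ (u y) (deriv u y) : ℝ)| ≤ ‖u y‖ * ‖deriv u y‖ :=
      abs_real_inner_le_norm _ _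
    rw [Real.norm_eq_abs, abs_mul, abs_two]
    nlinarith [sq_nonneg (‖u y‖ - ‖deriv u y‖), abs_nonneg (inner ℝ (u y) (deriv u y) : ℝ)]
  have hφint : Integrable φ := by
    refine (h2.add h2').mono' hφc.aestronglyMeasurable ?_
    exact Filter.Eventually.of_forall hφbound
  -- FTC on [x, y]
  have hFTC : ∀ y : ℝ, (∫ t in x..y, φ t) = g y - g x := fun y =>
    intervalIntegral.integral_eq_sub_of_hasDerivAt (fun t _ => hgderiv t)
      (hφc.intervalIntegrable x y)
  have htendI : Filter.Tendsto (fun y => ∫ t in x..y, φ t) Filter.atTop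
      (nhds (∫ t in Set.Ioi x, φ t)) :=
    intervalIntegral_tendsto_integral_Ioi x hφint.integrableOn Filter.tendsto_id
  have hgy : ∀ y, (∫ t in x..y, φ t) + g x = g y := fun y => by rw [hFTC y]; ring
  have htendg : Filter.Tendsto g Filter.atTop
      (nhds ((∫ t in Set.Ioi x, φ t) + g x)) :=
    Filter.Tendsto.congr hgy (htendI.add_const (g x))
  set L : ℝ := (∫ t in Set.Ioi x, φ t) + g x with hLdef
  have hL0 : L = 0 := by
    by_contra hLne
    have hLnn : 0 ≤ L :=
      ge_of_tendsto htendg (Filter.Eventually.of_forall fun y => sq_nonneg _)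
    have hLpos : 0 < L := lt_of_le_of_ne hLnn (Ne.symm hLne)
    have hev : ∀ᶠ y in Filter.atTop, L / 2 ≤ g y :=
      htendg.eventually (eventually_ge_nhds (by linarith))
    obtain ⟨A, hA⟩ := hev.exists_forall_of_atTop
    have hconst : Integrable (fun _ : ℝ => L / 2) (volume.restrict (Set.Ioi A)) := by
      refine (h2.restrict (s := Set.Ioi A)).mono' aestronglyMeasurable_const ?_
      refine (ae_restrict_iff' measurableSet_Ioi).2 (Filter.Eventually.of_forall fun y hy => ?_)
      rw [Real.norm_of_nonneg (by positivity)]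
      exact hA y hy.le
    rw [integrable_const_iff] at hconst
    rcases hconst with hc | hc
    · exact (by positivity : L / 2 ≠ 0) hc
    · replace hc := hc.measure_univ_lt_top
      rw [Measure.restrict_apply_univ, Real.volume_Ioi] at hc
      exact (lt_irrefl _ hc)
  have hgx : g x = - ∫ t in Set.Ioi x, φ t := by
    have : (∫ t in Set.Ioi x, φ t) + g x = 0 := hL0
    linarith
  have hnonneg : 0 ≤ᵐ[volume] fun y => ‖φ y‖ := Filter.Eventually.of_forall fun y => norm_nonneg _
  calc g x = - ∫ t in Set.Ioi x, φ t := hgx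
    _ ≤ ‖∫ t in Set.Ioi x, φ t‖ := by
        rw [Real.norm_eq_abs]; exact neg_le_abs _
    _ ≤ ∫ t in Set.Ioi x, ‖φ t‖ := norm_integral_le_integral_norm _
    _ ≤ ∫ t, ‖φ t‖ := setIntegral_le_integral hφint.norm hnonneg
    _ ≤ ∫ t, (‖u t‖ ^ 2 + ‖deriv u t‖ ^ 2) :=
        integral_mono hφint.norm (h2.add h2') hφbound
    _ = (∫ y, ‖u y‖ ^ 2) + ∫ y, ‖deriv u y‖ ^ 2 := integral_add h2 h2'

lemma norm_le_H1norm (u : ℝ → ℂ) (hu : ContDiff ℝ 1 u) (hu2 : MemLp u 2 (volume : Measure ℝ))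
    (hu'2 : MemLp (deriv u) 2 (volume : Measure ℝ)) (x : ℝ) : ‖u x‖ ≤ H1norm u := by
  have h := sup_sq_le u hu hu2 hu'2 x
  have : ‖u x‖ = Real.sqrt (‖u x‖ ^ 2) := (Real.sqrt_sq (norm_nonneg _)).symm
  rw [this, H1norm]
  exact Real.sqrt_le_sqrt h

/-- For every `q ∈ (0,2)` there is `C_q > 0` such that for all `C¹`
functions `u, v : ℝ → ℂ` with `u, u', v, v'` square-integrable,
`‖ |v|^q v − |u|^q u ‖ ≤ C_q ‖u − v‖ (‖u‖_{H¹}^q + ‖v‖_{H¹}^q)`. -/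
theorem nonlinearity_L2_difference_estimate (q : ℝ) (hq0 : 0 < q) (hq2 : q < 2) :
    ∃ C > (0 : ℝ), ∀ u v : ℝ → ℂ,
      ContDiff ℝ 1 u → MemLp u 2 volume → MemLp (deriv u) 2 volume →
      ContDiff ℝ 1 v → MemLp v 2 volume → MemLp (deriv v) 2 volume →
      L2norm (fun x => ((‖v x‖ ^ q : ℝ) : ℂ) * v x - ((‖u x‖ ^ q : ℝ) : ℂ) * u x) ≤
        C * L2norm (fun x => u x - v x) * (H1norm u ^ q + H1norm v ^ q) := by
  refine ⟨q + 2, by linarith, fun u v hu hu2 hu' hv hv2 hv' => ?_⟩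
  set Ku := H1norm u with hKu
  set Kv := H1norm v with hKv
  have hKunn : 0 ≤ Ku := Real.sqrt_nonneg _
  have hKvnn : 0 ≤ Kv := Real.sqrt_nonneg _
  set K : ℝ := (q + 2) * (Ku ^ q + Kv ^ q) with hKdef
  have hKnn : 0 ≤ K := by
    have := Real.rpow_nonneg hKunn q
    have := Real.rpow_nonneg hKvnn q
    positivity
  have hpt : ∀ x, ‖((‖v x‖ ^ q : ℝ) : ℂ) * v x - ((‖u x‖ ^ q : ℝ) : ℂ) * u x‖ ≤
      K * ‖u x - v x‖ := by
    intro x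
    have h1 := pointwise_key q hq0 (u x) (v x)
    have h2 : ‖u x‖ ^ q ≤ Ku ^ q :=
      Real.rpow_le_rpow (norm_nonneg _) (norm_le_H1norm u hu hu2 hu' x) hq0.le
    have h3 : ‖v x‖ ^ q ≤ Kv ^ q :=
      Real.rpow_le_rpow (norm_nonneg _) (norm_le_H1norm v hv hv2 hv' x) hq0.le
    have h4 : ‖v x - u x‖ = ‖u x - v x‖ := norm_sub_rev _ _
    rw [h4] at h1
    have h5 : (q + 2) * (‖u x‖ ^ q + ‖v x‖ ^ q) * ‖u x - v x‖ ≤ K * ‖u x - v x‖ := by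
      apply mul_le_mul_of_nonneg_right _ (norm_nonneg _)
      apply mul_le_mul_of_nonneg_left _ (by linarith)
      linarith
    exact h1.trans h5
  have hptsq : ∀ x, ‖((‖v x‖ ^ q : ℝ) : ℂ) * v x - ((‖u x‖ ^ q : ℝ) : ℂ) * u x‖ ^ 2 ≤
      K ^ 2 * ‖u x - v x‖ ^ 2 := by
    intro x
    have := hpt x
    nlinarith [norm_nonneg (((‖v x‖ ^ q : ℝ) : ℂ) * v x - ((‖u x‖ ^ q : ℝ) : ℂ) * u x),
      norm_nonneg (u x - v x)]
  have hintd : Integrable (fun x => ‖u x - v x‖ ^ 2) := integrable_norm_sq (hu2.sub hv2)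
  have hintK : Integrable (fun x => K ^ 2 * ‖u x - v x‖ ^ 2) := hintd.const_mul _
  have hIle : (∫ x, ‖((‖v x‖ ^ q : ℝ) : ℂ) * v x - ((‖u x‖ ^ q : ℝ) : ℂ) * u x‖ ^ 2) ≤
      ∫ x, K ^ 2 * ‖u x - v x‖ ^ 2 := by
    refine integral_mono_of_nonneg (Filter.Eventually.of_forall fun x => sq_nonneg _) hintK
      (Filter.Eventually.of_forall hptsq)
  have hIconst : (∫ x, K ^ 2 * ‖u x - v x‖ ^ 2) = K ^ 2 * ∫ x, ‖u x - v x‖ ^ 2 :=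
    integral_const_mul _ _
  rw [L2norm, L2norm]
  calc Real.sqrt (∫ x, ‖((‖v x‖ ^ q : ℝ) : ℂ) * v x - ((‖u x‖ ^ q : ℝ) : ℂ) * u x‖ ^ 2)
      ≤ Real.sqrt (K ^ 2 * ∫ x, ‖u x - v x‖ ^ 2) := by
        apply Real.sqrt_le_sqrt; rw [← hIconst]; exact hIle
    _ = K * Real.sqrt (∫ x, ‖u x - v x‖ ^ 2) := by
        rw [Real.sqrt_mul (sq_nonneg K), Real.sqrt_sq hKnn]
    _ = (q + 2) * Real.sqrt (∫ x, ‖u x - v x‖ ^ 2) * (Ku ^ q + Kv ^ q) := by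
        rw [hKdef]; ring
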